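/- Let s ∈ ℚ with 2s ∉ ℤ, and let η ∈ ℝ be either transcendental over ℚ or algebraic over ℚ of degree at least 5. If A ⊆ ℝ² is a set such that every element α ∈ Δ(A) satisfies α² = (k + s)² + η for some k ∈ ℕ, then A has at most 3 elements. -/

import Mathlib

open Polynomial

/-- If `η` is a root of a rational cubic with nonzero leading coefficient, then `η` is
algebraic of degree at most 3, contradicting both alternatives. -/
lemma cubic_root_contra (b0 b1 b2 b3 : ℚ) (hb3 : b3 ≠ 0) (η : ℝ)
    (h : (b0 : ℝ) + (b1 : ℝ) * η + (b2 : ℝ) * η ^ 2 + (b3 : ℝ) * η ^ 3 = 0)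
    (hη : Transcendental ℚ η ∨ (IsAlgebraic ℚ η ∧ 5 ≤ (minpoly ℚ η).natDegree)) : False := by
  set p : ℚ[X] := C b0 + C b1 * X + C b2 * X ^ 2 + C b3 * X ^ 3 with hp
  have haev : aeval η p = 0 := by
    simp only [hp, map_add, map_mul, map_pow, aeval_C, aeval_X]
    simpa only [eq_ratCast] using h
  have hpne : p ≠ 0 := by
    intro h0
    have hc : p.coeff 3 = b3 := by
      simp [hp, coeff_add, coeff_C, coeff_C_mul, coeff_X_pow]
    rw [h0] at hc
    simp at hc
    exact hb3 hc.symm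
  have hdeg : p.natDegree ≤ 3 := by
    rw [hp]; compute_degree
  rcases hη with htr | ⟨_, hmin⟩
  · exact htr ⟨p, hpne, haev⟩
  · have hdvd : minpoly ℚ η ∣ p := minpoly.dvd ℚ η haev
    have := Polynomial.natDegree_le_of_dvd hdvd hpne
    omega

/-- **Perturbed shifted Erdős–Solymosi theorem.**
Let `s ∈ ℚ` with `2s ∉ ℤ` and let `η` be transcendental over `ℚ`, or algebraic
over `ℚ` of degree at least 5. If each distance `α` between distinct points of
`A ⊆ ℝ²` satisfies `α² = (k + s)² + η` for some `k ∈ ℕ`, then `A` has at most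
3 elements. -/
theorem distance_set_perturbed (s : ℚ) (hs : ∀ m : ℤ, 2 * s ≠ (m : ℚ)) (η : ℝ)
    (hη : Transcendental ℚ η ∨ (IsAlgebraic ℚ η ∧ 5 ≤ (minpoly ℚ η).natDegree))
    (A : Set (EuclideanSpace ℝ (Fin 2)))
    (hA : ∀ a ∈ A, ∀ a' ∈ A, a ≠ a' →
      ∃ k : ℕ, (dist a a') ^ 2 = ((k : ℝ) + (s : ℝ)) ^ 2 + η) :
    A.Finite ∧ A.ncard ≤ 3 := by
  -- distances squared are rational shifts of η
  have hq : ∀ a ∈ A, ∀ b ∈ A, a ≠ b → ∃ c : ℚ, dist a b ^ 2 = (c : ℝ) + η := by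
    intro a ha b hb hab
    obtain ⟨k, hk⟩ := hA a ha b hb hab
    exact ⟨((k : ℚ) + s) ^ 2, by rw [hk]; push_cast; ring⟩
  -- key claim: no four pairwise distinct points in A
  have key : ∀ a₀ a₁ a₂ a₃ : EuclideanSpace ℝ (Fin 2), a₀ ∈ A → a₁ ∈ A → a₂ ∈ A → a₃ ∈ A →
      a₀ ≠ a₁ → a₀ ≠ a₂ → a₀ ≠ a₃ → a₁ ≠ a₂ → a₁ ≠ a₃ → a₂ ≠ a₃ → False := by
    intro a₀ a₁ a₂ a₃ h₀ h₁ h₂ h₃ n01 n02 n03 n12 n13 n23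
    obtain ⟨c1, hd1⟩ := hq a₁ h₁ a₀ h₀ n01.symm
    obtain ⟨c2, hd2⟩ := hq a₂ h₂ a₀ h₀ n02.symm
    obtain ⟨c3, hd3⟩ := hq a₃ h₃ a₀ h₀ n03.symm
    obtain ⟨c12, hd12⟩ := hq a₁ h₁ a₂ h₂ n12
    obtain ⟨c13, hd13⟩ := hq a₁ h₁ a₃ h₃ n13
    obtain ⟨c23, hd23⟩ := hq a₂ h₂ a₃ h₃ n23
    -- the three difference vectors are linearly dependent in ℝ²
    set v : Fin 3 → EuclideanSpace ℝ (Fin 2) := ![a₁ - a₀, a₂ - a₀, a₃ - a₀] with hv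
    have hnli : ¬ LinearIndependent ℝ v := by
      intro hli
      have := hli.fintype_card_le_finrank
      simp [finrank_euclideanSpace] at this
    obtain ⟨g, hg, i, hgi⟩ := Fintype.not_linearIndependent_iff.mp hnli
    -- Gram matrix is singular
    set M : Matrix (Fin 3) (Fin 3) ℝ := Matrix.of fun i j => (inner ℝ (v i) (v j) : ℝ) with hM
    have hdet : M.det = 0 := by
      rw [← Matrix.exists_mulVec_eq_zero_iff]
      refine ⟨g, fun h0 => hgi (congrFun h0 i), ?_⟩
      funext j
      simp only [Matrix.mulVec, dotProduct, hM, Matrix.of_apply, Pi.zero_apply]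
      calc ∑ k, (inner ℝ (v j) (v k) : ℝ) * g k
          = (inner ℝ (v j) (∑ k, g k • v k) : ℝ) := by
            rw [inner_sum]
            exact Finset.sum_congr rfl fun k _ => by
              rw [real_inner_smul_right]; ring
        _ = 0 := by rw [hg, inner_zero_right]
    rw [Matrix.det_fin_three] at hdet
    have hip : ∀ x y : EuclideanSpace ℝ (Fin 2),
        (inner ℝ x y : ℝ) = (‖x‖ ^ 2 + ‖y‖ ^ 2 - ‖x - y‖ ^ 2) / 2 := by
      intro x y
      have := norm_sub_sq_real x y
      linarith
    simp only [hM, Matrix.of_apply, hip] at hdet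
    simp only [hv, Matrix.cons_val_zero, Matrix.cons_val_one, Matrix.head_cons,
      Matrix.cons_val_two, Matrix.tail_cons, sub_sub_sub_cancel_right, sub_self,
      norm_zero] at hdet
    simp only [← dist_eq_norm] at hdet
    simp only [dist_comm a₂ a₁, dist_comm a₃ a₁, dist_comm a₃ a₂] at hdet
    simp only [hd1, hd2, hd3, hd12, hd13, hd23] at hdet
    refine cubic_root_contra
      (((-1)*c12*c13*c23 + (1)*c3*c12*c23 + (1)*c3*c12*c13 + (-1)*c3*c12^2 + (-1)*c3^2*c12 + (1)*c2*c13*c23 + (-1)*c2*c13^2 + (1)*c2*c12*c13 + (-1)*c2*c3*c23 + (1)*c2*c3*c13 + (1)*c2*c3*c12 + (-1)*c2^2*c13 + (-1)*c1*c23^2 + (1)*c1*c13*c23 + (1)*c1*c12*c23 + (1)*c1*c3*c23 + (-1)*c1*c3*c13 + (1)*c1*c3*c12 + (1)*c1*c2*c23 + (1)*c1*c2*c13 + (-1)*c1*c2*c12 + (-1)*c1^2*c23)/4)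
      (((-1)*c23^2 + (1)*c13*c23 + (-1)*c13^2 + (1)*c12*c23 + (1)*c12*c13 + (-1)*c12^2 + (1)*c3*c23 + (1)*c3*c13 + (-1)*c3^2 + (1)*c2*c23 + (1)*c2*c12 + (1)*c2*c3 + (-1)*c2^2 + (1)*c1*c13 + (1)*c1*c12 + (1)*c1*c3 + (1)*c1*c2 + (-1)*c1^2)/4)
      (((1)*c23 + (1)*c13 + (1)*c12 + (1)*c3 + (1)*c2 + (1)*c1)/4)
      (1/2) (by norm_num) η ?_ hη
    push_cast
    linear_combination hdet
  -- counting
  have hcard : ∀ S : Finset (EuclideanSpace ℝ (Fin 2)), ↑S ⊆ A → S.card ≤ 3 := by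
    classical
    intro S hS
    by_contra hlt
    push_neg at hlt
    obtain ⟨T, hTS, hT4⟩ := Finset.exists_subset_card_eq (s := S) (n := 4) (by omega)
    rw [show (4 : ℕ) = 3 + 1 from rfl, Finset.card_eq_succ] at hT4
    obtain ⟨a, T', haT', hins, hT3⟩ := hT4
    obtain ⟨b, c, d, hbc, hbd, hcd, rfl⟩ := Finset.card_eq_three.mp hT3
    simp only [Finset.mem_insert, Finset.mem_singleton, not_or] at haT'
    obtain ⟨hab, hac, had⟩ := haT'
    have hmem : ∀ x ∈ insert a ({b, c, d} : Finset (EuclideanSpace ℝ (Fin 2))), x ∈ A :=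
      fun x hx => hS (hTS (hins ▸ hx))
    exact key a b c d (hmem a (by simp)) (hmem b (by simp)) (hmem c (by simp))
      (hmem d (by simp)) hab hac had hbc hbd hcd
  have hfin : A.Finite := by
    by_contra hinf
    obtain ⟨S, hS, hcardS⟩ := Set.Infinite.exists_subset_card_eq hinf 4
    have := hcard S hS
    omega
  refine ⟨hfin, ?_⟩
  rw [Set.ncard_eq_toFinset_card A hfin]
  exact hcard hfin.toFinset (by simp [Set.Finite.coe_toFinset])
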